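/- Let I ⊆ ℝ be an interval and f : I → [0,1] a twice differentiable, surjective, strictly increasing function such that: (1) f''(x)·(1−f(x)²) + f(x)·(f'(x))² ≤ 0 for all x ∈ I, and (2) for all a,b,c,d,R,S > 0, (R/(R+S))·f⁻¹(√(ab/((R+a)(R+b)))) + (S/(R+S))·f⁻¹(√(cd/((S+c)(S+d)))) ≤ f⁻¹(√((a+c)(b+d)/((R+S+a+c)(R+S+b+d)))). Then for all a,b,c,d,R,S > 0, R·arcsin(√(ab/((R+a)(R+b)))) + S·arcsin(√(cd/((S+c)(S+d)))) ≤ (R+S)·arcsin(√((a+c)(b+d)/((R+S+a+c)(R+S+b+d)))). -/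

import Mathlib

open Real Set

/-- Auxiliary: on a convex subset of `I` where `f` stays in `[0,1)`, the
composition `arcsin ∘ f` is concave. -/
lemma aux_concave {I D : Set ℝ} {f f' f'' : ℝ → ℝ}
    (hD : Convex ℝ D) (hDI : D ⊆ I)
    (hd1 : ∀ x ∈ I, HasDerivWithinAt f (f' x) I x)
    (hd2 : ∀ x ∈ I, HasDerivWithinAt f' (f'' x) I x)
    (h1 : ∀ x ∈ I, f'' x * (1 - (f x) ^ 2) + f x * (f' x) ^ 2 ≤ 0)
    (hrange : ∀ x ∈ D, f x ∈ Set.Ico (0:ℝ) 1) :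
    ConcaveOn ℝ D (fun y => Real.arcsin (f y)) := by
  have hIntI : interior D ⊆ interior I :=
    interior_maximal (interior_subset.trans hDI) isOpen_interior
  have key : ∀ x ∈ interior D,
      HasDerivAt f (f' x) x ∧ HasDerivAt f' (f'' x) x ∧ 0 < 1 - f x ^ 2 := by
    intro x hx
    have hxI : x ∈ I := hDI (interior_subset hx)
    have hmem : I ∈ nhds x := Filter.mem_of_superset (isOpen_interior.mem_nhds (hIntI hx)) interior_subset
    have hr := hrange x (interior_subset hx)
    refine ⟨(hd1 x hxI).hasDerivAt hmem, (hd2 x hxI).hasDerivAt hmem, ?_⟩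
    nlinarith [hr.1, hr.2]
  refine concaveOn_of_hasDerivWithinAt2_nonpos hD ?_
    (f' := fun x => f' x / Real.sqrt (1 - f x ^ 2))
    (f'' := fun x => (f'' x * (1 - f x ^ 2) + f x * (f' x) ^ 2) / Real.sqrt (1 - f x ^ 2) ^ 3)
    ?_ ?_ ?_
  · -- continuity
    have hcf : ContinuousOn f I := fun x hx => (hd1 x hx).continuousWithinAt
    exact Real.continuous_arcsin.comp_continuousOn (hcf.mono hDI)
  · -- first derivative
    intro x hx
    obtain ⟨hfd, -, hpos⟩ := key x hx
    have hr := hrange x (interior_subset hx)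
    have h₁ : f x ≠ -1 := by linarith [hr.1]
    have h₂ : f x ≠ 1 := ne_of_lt hr.2
    have := (Real.hasDerivAt_arcsin h₁ h₂).comp x hfd
    have heq : 1 / Real.sqrt (1 - f x ^ 2) * f' x = f' x / Real.sqrt (1 - f x ^ 2) := by ring
    rw [heq] at this
    exact this.hasDerivWithinAt
  · -- second derivative
    intro x hx
    obtain ⟨hfd, hfd2, hpos⟩ := key x hx
    have hs : Real.sqrt (1 - f x ^ 2) ≠ 0 := by positivity
    have hsq : Real.sqrt (1 - f x ^ 2) ^ 2 = 1 - f x ^ 2 := Real.sq_sqrt hpos.le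
    -- derivative of the inner function 1 - f y ^ 2, at points near x
    have hinner : HasDerivAt (fun y => 1 - f y ^ 2) (0 - 2 * f x ^ 1 * f' x) x :=
      (hasDerivAt_const x (1:ℝ)).sub (hfd.pow 2)
    have hsqrt : HasDerivAt (fun y => Real.sqrt (1 - f y ^ 2))
        (1 / (2 * Real.sqrt (1 - f x ^ 2)) * (0 - 2 * f x ^ 1 * f' x)) x :=
      (Real.hasDerivAt_sqrt (ne_of_gt hpos)).comp x hinner
    set s := Real.sqrt (1 - f x ^ 2) with hs_def
    have hdiv := hfd2.div hsqrt hs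
    have heq : (f'' x * Real.sqrt (1 - f x ^ 2) -
        f' x * (1 / (2 * Real.sqrt (1 - f x ^ 2)) * (0 - 2 * f x ^ 1 * f' x))) /
        Real.sqrt (1 - f x ^ 2) ^ 2
        = (f'' x * (1 - f x ^ 2) + f x * (f' x) ^ 2) / Real.sqrt (1 - f x ^ 2) ^ 3 := by
      rw [← hsq]
      field_simp
      rw [Real.sq_sqrt (sq_nonneg _)]
      ring
    rw [heq] at hdiv
    exact hdiv.hasDerivWithinAt
  · -- sign
    intro x hx
    obtain ⟨-, -, hpos⟩ := key x hx
    have hxI : x ∈ I := hDI (interior_subset hx)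
    have hnum := h1 x hxI
    have hden : 0 < Real.sqrt (1 - f x ^ 2) ^ 3 := by positivity
    exact div_nonpos_of_nonpos_of_nonneg hnum hden.le
lemma aux_sqrt_mem {t : ℝ} (h0 : 0 < t) (h1 : t < 1) :
    Real.sqrt t ∈ Set.Ioo (0:ℝ) 1 := by
  refine ⟨Real.sqrt_pos.2 h0, ?_⟩
  nlinarith [Real.sq_sqrt h0.le, Real.sqrt_nonneg t]

theorem arcsin_ineq_of_concavity_and_inverse_ineq
    (I : Set ℝ) (hI : I.OrdConnected)
    (f f' f'' g : ℝ → ℝ)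
    (hmaps : Set.MapsTo f I (Set.Icc 0 1))
    (hsurj : Set.SurjOn f I (Set.Icc 0 1))
    (hmono : StrictMonoOn f I)
    (hg : Set.MapsTo g (Set.Icc 0 1) I)
    (hgf : ∀ x ∈ I, g (f x) = x)
    (hfg : ∀ y ∈ Set.Icc (0 : ℝ) 1, f (g y) = y)
    (hd1 : ∀ x ∈ I, HasDerivWithinAt f (f' x) I x)
    (hd2 : ∀ x ∈ I, HasDerivWithinAt f' (f'' x) I x)
    (h1 : ∀ x ∈ I, f'' x * (1 - (f x) ^ 2) + f x * (f' x) ^ 2 ≤ 0)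
    (h2 : ∀ a b c d R S : ℝ, 0 < a → 0 < b → 0 < c → 0 < d → 0 < R → 0 < S →
      (R / (R + S)) * g (Real.sqrt (a * b / ((R + a) * (R + b)))) +
        (S / (R + S)) * g (Real.sqrt (c * d / ((S + c) * (S + d)))) ≤
      g (Real.sqrt ((a + c) * (b + d) /
        ((R + S + a + c) * (R + S + b + d))))) :
    ∀ a b c d R S : ℝ, 0 < a → 0 < b → 0 < c → 0 < d → 0 < R → 0 < S →
      R * Real.arcsin (Real.sqrt (a * b / ((R + a) * (R + b)))) +
        S * Real.arcsin (Real.sqrt (c * d / ((S + c) * (S + d)))) ≤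
      (R + S) * Real.arcsin (Real.sqrt ((a + c) * (b + d) /
        ((R + S + a + c) * (R + S + b + d)))) := by
  intro a b c d R S ha hb hc hd hR hS
  have hRS : (0:ℝ) < R + S := by linarith
  have key := h2 a b c d R S ha hb hc hd hR hS
  set u := Real.sqrt (a * b / ((R + a) * (R + b))) with hu_def
  set v := Real.sqrt (c * d / ((S + c) * (S + d))) with hv_def
  set w := Real.sqrt ((a + c) * (b + d) / ((R + S + a + c) * (R + S + b + d))) with hw_def
  have hu : u ∈ Set.Ioo (0:ℝ) 1 :=
    aux_sqrt_mem (by positivity) (by rw [div_lt_one (by positivity)]; nlinarith)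
  have hv : v ∈ Set.Ioo (0:ℝ) 1 :=
    aux_sqrt_mem (by positivity) (by rw [div_lt_one (by positivity)]; nlinarith)
  have hw : w ∈ Set.Ioo (0:ℝ) 1 :=
    aux_sqrt_mem (by positivity) (by rw [div_lt_one (by positivity)]; nlinarith)
  have hu' : u ∈ Set.Icc (0:ℝ) 1 := ⟨hu.1.le, hu.2.le⟩
  have hv' : v ∈ Set.Icc (0:ℝ) 1 := ⟨hv.1.le, hv.2.le⟩
  have hw' : w ∈ Set.Icc (0:ℝ) 1 := ⟨hw.1.le, hw.2.le⟩
  have hp : g u ∈ I := hg hu'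
  have hq : g v ∈ I := hg hv'
  have hr : g w ∈ I := hg hw'
  have hfp : f (g u) = u := hfg u hu'
  have hfq : f (g v) = v := hfg v hv'
  have hfr : f (g w) = w := hfg w hw'
  set D := Set.uIcc (g u) (g v) with hD_def
  have hDI : D ⊆ I := hI.uIcc_subset hp hq
  have hDconv : Convex ℝ D := convex_uIcc _ _
  have hrange : ∀ y ∈ D, f y ∈ Set.Ico (0:ℝ) 1 := by
    intro y hy
    have hyI : y ∈ I := hDI hy
    refine ⟨(hmaps hyI).1, ?_⟩
    have hmax : f y ≤ max u v := by
      rcases le_total (g u) (g v) with hpq | hpq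
      · have hy' : y ≤ g v := by
          rw [hD_def, Set.uIcc_of_le hpq] at hy; exact hy.2
        calc f y ≤ f (g v) := hmono.monotoneOn hyI hq hy'
          _ = v := hfq
          _ ≤ max u v := le_max_right _ _
      · have hy' : y ≤ g u := by
          rw [hD_def, Set.uIcc_of_ge hpq] at hy; exact hy.2
        calc f y ≤ f (g u) := hmono.monotoneOn hyI hp hy'
          _ = u := hfp
          _ ≤ max u v := le_max_left _ _
    exact lt_of_le_of_lt hmax (max_lt hu.2 hv.2)
  have hcon : ConcaveOn ℝ D (fun y => Real.arcsin (f y)) :=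
    aux_concave hDconv hDI hd1 hd2 h1 hrange
  have hlam : (0:ℝ) ≤ R / (R + S) := by positivity
  have hmu : (0:ℝ) ≤ S / (R + S) := by positivity
  have hsum : R / (R + S) + S / (R + S) = 1 := by field_simp
  have hcomb := hcon.2 (Set.left_mem_uIcc) (Set.right_mem_uIcc) hlam hmu hsum
  simp only [smul_eq_mul] at hcomb
  rw [hfp, hfq] at hcomb
  set z := R / (R + S) * g u + S / (R + S) * g v with hz_def
  have hzD : z ∈ D := by
    have := hDconv Set.left_mem_uIcc Set.right_mem_uIcc hlam hmu hsum
    simpa [smul_eq_mul] using this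
  have hzI : z ∈ I := hDI hzD
  have hzr : z ≤ g w := key
  have hmono2 : Real.arcsin (f z) ≤ Real.arcsin (f (g w)) :=
    Real.monotone_arcsin (hmono.monotoneOn hzI hr hzr)
  rw [hfr] at hmono2
  have final : R / (R + S) * Real.arcsin u + S / (R + S) * Real.arcsin v
      ≤ Real.arcsin w := le_trans hcomb hmono2
  calc R * Real.arcsin u + S * Real.arcsin v
      = (R + S) * (R / (R + S) * Real.arcsin u + S / (R + S) * Real.arcsin v) := by
        field_simp
    _ ≤ (R + S) * Real.arcsin w := mul_le_mul_of_nonneg_left final hRS.le
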